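/- arXiv:cond-mat/0303625 — 5 statements merged into one kernel-verified Lean document; each statement's English description precedes it below -/
import Mathlib

section
/- Let Ω be a set and let A and B be finite partitions of Ω such that every cell of B is contained in some cell of A. Then there exists a partition C of Ω such that A·C = B and such that every partition D of Ω with A·D = B has at least as many cells as C; moreover, the number of cells of any such minimal C equals the maximum over the cells a of A of the number n_a of cells of B contained in a. -/
/-- A partition of a set `Ω` (here: of the whole type `Ω`): a collection of pairwise
disjoint nonempty subsets whose union is everything. -/
def IsPartition {Ω : Type*} (A : Set (Set Ω)) : Prop :=
  (∀ a ∈ A, a.Nonempty) ∧ (∀ a ∈ A, ∀ b ∈ A, a ≠ b → a ∩ b = ∅) ∧ ⋃₀ A = Set.univ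

/-- The product of two partitions: all nonempty sets of the form `a ∩ b`. -/
def partProd {Ω : Type*} (A B : Set (Set Ω)) : Set (Set Ω) :=
  {c | c.Nonempty ∧ ∃ a ∈ A, ∃ b ∈ B, c = a ∩ b}

/-- `B` refines `A`: every cell of `B` is contained in some cell of `A`. -/
def Refines {Ω : Type*} (B A : Set (Set Ω)) : Prop :=
  ∀ b ∈ B, ∃ a ∈ A, b ⊆ a

open Set

private lemma exists_bijOn_Iio {X : Type*} (s : Set X) (hs : s.Finite) :
    ∃ f : X → ℕ, Set.BijOn f s (Set.Iio s.ncard) := by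
  classical
  have e := hs.toFinset.equivFin
  refine ⟨fun x => if h : x ∈ hs.toFinset then (e ⟨x, h⟩).val else 0, ?_, ?_, ?_⟩
  · intro x hx
    have hx' : x ∈ hs.toFinset := hs.mem_toFinset.mpr hx
    simp only [hx', dif_pos]
    have := (e ⟨x, hx'⟩).isLt
    simpa [Set.ncard_eq_toFinset_card s hs] using this
  · intro x hx y hy hxy
    have hx' : x ∈ hs.toFinset := hs.mem_toFinset.mpr hx
    have hy' : y ∈ hs.toFinset := hs.mem_toFinset.mpr hy
    simp only [hx', hy', dif_pos] at hxy
    have : (⟨x, hx'⟩ : hs.toFinset) = ⟨y, hy'⟩ := e.injective (Fin.val_injective hxy)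
    simpa using congrArg Subtype.val this
  · intro j hj
    have hj' : j < hs.toFinset.card := by
      simpa [Set.ncard_eq_toFinset_card s hs] using hj
    obtain ⟨⟨x, hx⟩, hex⟩ := e.surjective ⟨j, hj'⟩
    exact ⟨x, hs.mem_toFinset.mp hx, by simp [hx, hex]⟩

private lemma cell_unique {Ω : Type*} {A : Set (Set Ω)} (hA : IsPartition A)
    {a₁ a₂ b : Set Ω} (h₁ : a₁ ∈ A) (h₂ : a₂ ∈ A) (hb : b.Nonempty)
    (hb₁ : b ⊆ a₁) (hb₂ : b ⊆ a₂) : a₁ = a₂ := by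
  by_contra hne
  obtain ⟨x, hx⟩ := hb
  have hmem : x ∈ a₁ ∩ a₂ := ⟨hb₁ hx, hb₂ hx⟩
  rw [hA.2.1 a₁ h₁ a₂ h₂ hne] at hmem
  exact hmem

private lemma factor_finite {Ω : Type*} {A B D : Set (Set Ω)} (hA : IsPartition A)
    (hD : IsPartition D) (hBfin : B.Finite) (hprod : partProd A D = B) : D.Finite := by
  classical
  have key : ∀ d ∈ D, ∃ b ∈ B, b ⊆ d ∧ b.Nonempty := by
    intro d hd
    obtain ⟨x, hx⟩ := hD.1 d hd
    have hxuniv : x ∈ ⋃₀ A := hA.2.2 ▸ mem_univ x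
    obtain ⟨a, ha, hxa⟩ := hxuniv
    refine ⟨a ∩ d, ?_, inter_subset_right, ⟨x, hxa, hx⟩⟩
    rw [← hprod]
    exact ⟨⟨x, hxa, hx⟩, a, ha, d, hd, rfl⟩
  set f : Set Ω → Set Ω := fun d => if h : ∃ b ∈ B, b ⊆ d ∧ b.Nonempty then h.choose else ∅
    with hf
  have hmaps : ∀ d ∈ D, f d ∈ B ∧ f d ⊆ d ∧ (f d).Nonempty := by
    intro d hd
    have h := key d hd
    simp only [hf, dif_pos h]
    exact ⟨h.choose_spec.1, h.choose_spec.2⟩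
  have hinj : Set.InjOn f D := by
    intro d₁ h₁ d₂ h₂ hfe
    by_contra hne
    obtain ⟨x, hx⟩ := (hmaps d₁ h₁).2.2
    have hmem : x ∈ d₁ ∩ d₂ := ⟨(hmaps d₁ h₁).2.1 hx, (hmaps d₂ h₂).2.1 (hfe ▸ hx)⟩
    rw [hD.2.1 d₁ h₁ d₂ h₂ hne] at hmem
    exact hmem
  exact Set.Finite.of_finite_image
    (hBfin.subset (by rintro y ⟨d, hd, rfl⟩; exact (hmaps d hd).1)) hinj

private lemma lb_lemma {Ω : Type*} {A B D : Set (Set Ω)} (hA : IsPartition A)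
    (hD : IsPartition D) (hBfin : B.Finite) (hprod : partProd A D = B)
    {a : Set Ω} (ha : a ∈ A) : {b ∈ B | b ⊆ a}.ncard ≤ D.ncard := by
  classical
  have hDfin := factor_finite hA hD hBfin hprod
  have key : ∀ b ∈ {b ∈ B | b ⊆ a}, ∃ d ∈ D, b = a ∩ d := by
    intro b hb
    obtain ⟨hbB, hba⟩ := hb
    have hmem : b ∈ partProd A D := hprod ▸ hbB
    obtain ⟨hbne, a', ha', d, hd, hbd⟩ := hmem
    have : a' = a := cell_unique hA ha' ha hbne (hbd ▸ inter_subset_left) hba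
    exact ⟨d, hd, this ▸ hbd⟩
  set f : Set Ω → Set Ω := fun b => if h : ∃ d ∈ D, b = a ∩ d then h.choose else ∅ with hf
  have hmaps : ∀ b ∈ {b ∈ B | b ⊆ a}, f b ∈ D ∧ b = a ∩ f b := by
    intro b hb
    have h := key b hb
    simp only [hf, dif_pos h]
    exact h.choose_spec
  refine Set.ncard_le_ncard_of_injOn f (fun b hb => (hmaps b hb).1) ?_ hDfin
  intro b₁ h₁ b₂ h₂ hfe
  rw [(hmaps b₁ h₁).2, (hmaps b₂ h₂).2, hfe]


/-- if `B` is a finite refinement of the finite partition `A`, then there is a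
partition `C` with `A·C = B` which has the fewest cells among all such partitions; moreover
the number of cells of any such minimal factor equals `max_{a ∈ A} n_a`, where `n_a` is the
number of cells of `B` contained in `a`. -/
theorem factoring_refinements {Ω : Type*} (A B : Set (Set Ω))
    (hA : IsPartition A) (hB : IsPartition B) (hAfin : A.Finite) (hBfin : B.Finite)
    (href : Refines B A) :
    (∃ C : Set (Set Ω), IsPartition C ∧ partProd A C = B ∧
      ∀ D : Set (Set Ω), IsPartition D → partProd A D = B → C.ncard ≤ D.ncard) ∧
    (∀ C : Set (Set Ω), IsPartition C → partProd A C = B →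
      (∀ D : Set (Set Ω), IsPartition D → partProd A D = B → C.ncard ≤ D.ncard) →
      C.ncard = sSup ((fun a => {b ∈ B | b ⊆ a}.ncard) '' A)) := by
  classical
  set n : Set Ω → ℕ := fun a => {b ∈ B | b ⊆ a}.ncard with hn
  set N := sSup (n '' A) with hNdef
  -- lower bound for any factor D
  have lb : ∀ D : Set (Set Ω), IsPartition D → partProd A D = B → N ≤ D.ncard := by
    intro D hD hprod
    rcases (n '' A).eq_empty_or_nonempty with he | hne
    · rw [hNdef, he, csSup_empty]; exact Nat.zero_le _
    · obtain ⟨a, ha, hna⟩ := Set.Nonempty.csSup_mem hne (hAfin.image n)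
      rw [hNdef, ← hna]
      exact lb_lemma hA hD hBfin hprod ha
  -- enumerations
  have σspec : ∀ a : Set Ω, ∃ f : Set Ω → ℕ, Set.BijOn f {b ∈ B | b ⊆ a} (Set.Iio (n a)) :=
    fun a => exists_bijOn_Iio _ (hBfin.subset (sep_subset _ _))
  choose σ hσ using σspec
  set α : Set Ω → Set Ω := fun b => if h : ∃ a ∈ A, b ⊆ a then h.choose else ∅ with hα
  have hαA : ∀ b ∈ B, α b ∈ A ∧ b ⊆ α b := by
    intro b hb
    have h := href b hb
    simp only [hα, dif_pos h]
    exact ⟨h.choose_spec.1, h.choose_spec.2⟩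
  have hαeq : ∀ a ∈ A, ∀ b ∈ B, b ⊆ a → α b = a := by
    intro a ha b hb hba
    exact cell_unique hA (hαA b hb).1 ha (hB.1 b hb) (hαA b hb).2 hba
  set τ : Set Ω → ℕ := fun b => σ (α b) b with hτ
  have hτa : ∀ a ∈ A, ∀ b ∈ B, b ⊆ a → τ b = σ a b := by
    intro a ha b hb hba
    simp only [hτ, hαeq a ha b hb hba]
  have hnleN : ∀ a ∈ A, n a ≤ N :=
    fun a ha => le_csSup (hAfin.image n).bddAbove ⟨a, ha, rfl⟩
  set c : ℕ → Set Ω := fun i => ⋃₀ {b ∈ B | τ b = i} with hc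
  set C : Set (Set Ω) := c '' Set.Iio N with hC
  have exist_b : ∀ i < N, ∃ b ∈ B, τ b = i := by
    intro i hi
    have hne : (n '' A).Nonempty := by
      by_contra h
      rw [Set.not_nonempty_iff_eq_empty] at h
      rw [hNdef, h, csSup_empty] at hi
      simp at hi
    obtain ⟨a, ha, hna⟩ := Set.Nonempty.csSup_mem hne (hAfin.image n)
    have hsurj := (hσ a).2.2 (show i ∈ Set.Iio (n a) by rw [hna]; exact hi)
    obtain ⟨b, hbmem, hbi⟩ := hsurj
    exact ⟨b, hbmem.1, by rw [hτa a ha b hbmem.1 hbmem.2]; exact hbi⟩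
  have cdisj : ∀ i j, i ≠ j → c i ∩ c j = ∅ := by
    intro i j hij
    ext x
    simp only [mem_inter_iff, mem_empty_iff_false, iff_false, not_and]
    intro hxi hxj
    obtain ⟨b₁, ⟨hb₁, hτ₁⟩, hx₁⟩ := hxi
    obtain ⟨b₂, ⟨hb₂, hτ₂⟩, hx₂⟩ := hxj
    have hbne : b₁ ≠ b₂ := fun h => hij (by rw [← hτ₁, ← hτ₂, h])
    have hmem : x ∈ b₁ ∩ b₂ := ⟨hx₁, hx₂⟩
    rw [hB.2.1 b₁ hb₁ b₂ hb₂ hbne] at hmem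
    exact hmem
  have key : ∀ a ∈ A, ∀ b ∈ B, b ⊆ a → a ∩ c (τ b) = b := by
    intro a ha b hb hba
    apply Set.Subset.antisymm
    · rintro x ⟨hxa, hxc⟩
      obtain ⟨b', ⟨hb', hτ'⟩, hx'⟩ := hxc
      have haeq : α b' = a := by
        by_contra hneq
        have hmem : x ∈ α b' ∩ a := ⟨(hαA b' hb').2 hx', hxa⟩
        rw [hA.2.1 (α b') (hαA b' hb').1 a ha hneq] at hmem
        exact hmem
      have hb'a : b' ⊆ a := haeq ▸ (hαA b' hb').2
      have hbeq : b' = b := (hσ a).2.1 ⟨hb', hb'a⟩ ⟨hb, hba⟩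
        (by rw [← hτa a ha b' hb' hb'a, ← hτa a ha b hb hba, hτ'])
      exact hbeq ▸ hx'
    · intro x hx
      exact ⟨hba hx, b, ⟨hb, rfl⟩, hx⟩
  have hτlt : ∀ b ∈ B, τ b < N := by
    intro b hb
    have h1 : σ (α b) b ∈ Set.Iio (n (α b)) := (hσ (α b)).1 ⟨hb, (hαA b hb).2⟩
    have h2 := hnleN (α b) (hαA b hb).1
    have h3 : τ b < n (α b) := h1
    omega
  have hprodC : partProd A C = B := by
    ext x
    constructor
    · rintro ⟨hxne, a, ha, cc, ⟨i, hi, rfl⟩, rfl⟩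
      obtain ⟨ω, hωa, hωc⟩ := hxne
      obtain ⟨b', ⟨hb', hτ'⟩, hω'⟩ := hωc
      have haeq : α b' = a := by
        by_contra hneq
        have hmem : ω ∈ α b' ∩ a := ⟨(hαA b' hb').2 hω', hωa⟩
        rw [hA.2.1 (α b') (hαA b' hb').1 a ha hneq] at hmem
        exact hmem
      have hb'a : b' ⊆ a := haeq ▸ (hαA b' hb').2
      rw [← hτ', key a ha b' hb' hb'a]
      exact hb'
    · intro hb
      have ha := (hαA x hb).1
      have hxa := (hαA x hb).2
      exact ⟨hB.1 x hb, α x, ha, c (τ x), ⟨τ x, hτlt x hb, rfl⟩,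
        (key (α x) ha x hb hxa).symm⟩
  have hCpart : IsPartition C := by
    refine ⟨?_, ?_, ?_⟩
    · rintro _ ⟨i, hi, rfl⟩
      obtain ⟨b, hbB, hτb⟩ := exist_b i hi
      obtain ⟨x, hx⟩ := hB.1 b hbB
      exact ⟨x, b, ⟨hbB, hτb⟩, hx⟩
    · rintro _ ⟨i, hi, rfl⟩ _ ⟨j, hj, rfl⟩ hne
      exact cdisj i j (fun h => hne (by rw [h]))
    · apply Set.eq_univ_of_forall
      intro x
      have hx : x ∈ ⋃₀ B := hB.2.2 ▸ mem_univ x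
      obtain ⟨b, hbB, hxb⟩ := hx
      exact ⟨c (τ b), ⟨τ b, hτlt b hbB, rfl⟩, b, ⟨hbB, rfl⟩, hxb⟩
  have hCcard : C.ncard = N := by
    have hinj : Set.InjOn c (Set.Iio N) := by
      intro i hi j hj hcij
      by_contra hne
      obtain ⟨b, hbB, hτb⟩ := exist_b i hi
      obtain ⟨x, hx⟩ := hB.1 b hbB
      have hxi : x ∈ c i := ⟨b, ⟨hbB, hτb⟩, hx⟩
      have hmem : x ∈ c i ∩ c j := ⟨hxi, hcij ▸ hxi⟩
      rw [cdisj i j hne] at hmem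
      exact hmem
    rw [hC, Set.ncard_image_of_injOn hinj, ← Finset.coe_range,
      Set.ncard_coe_finset, Finset.card_range]
  constructor
  · exact ⟨C, hCpart, hprodC, fun D hD hp => hCcard ▸ lb D hD hp⟩
  · intro C' hC' hp' hmin
    have h1 : C'.ncard ≤ N := hCcard ▸ hmin C hCpart hprodC
    have h2 : N ≤ C'.ncard := lb C' hC' hp'
    show C'.ncard = N
    omega
end

section
/- Let Ω be a set and let A and B be finite partitions of Ω such that every cell of B is contained in some cell of A, with B ≠ A and with A having at least two cells. Then every minimal factor partition C for (A, B) is incomparable to A: C ≠ A, some cell of C is not contained in any cell of A, and some cell of A is not contained in any cell of C. -/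
/-- A minimal factor partition for the pair `(A, B)`: a partition `C` with `A·C = B` such
that no partition with strictly fewer cells than `C` satisfies this. -/
def IsMinimalFactor {Ω : Type*} (A B C : Set (Set Ω)) : Prop :=
  IsPartition C ∧ partProd A C = B ∧
    ∀ D : Set (Set Ω), IsPartition D → partProd A D = B → ¬ D.ncard < C.ncard

lemma part_cell_subset {Ω : Type*} {A B : Set (Set Ω)} (hA : IsPartition A)
    (href : Refines B A) {a b : Set Ω} (ha : a ∈ A) (hb : b ∈ B) {x : Ω}
    (hxb : x ∈ b) (hxa : x ∈ a) : b ⊆ a := by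
  obtain ⟨a', ha', hba'⟩ := href b hb
  rcases eq_or_ne a a' with rfl | hne
  · exact hba'
  · have hx : x ∈ a ∩ a' := ⟨hxa, hba' hxb⟩
    rw [hA.2.1 a ha a' ha' hne] at hx
    exact hx.elim

/-- if `B` is a finite proper refinement of the finite partition `A`, which has
at least two cells, then every minimal factor partition `C` for `(A, B)` is incomparable to
`A`: `C ≠ A`, some cell of `C` is contained in no cell of `A`, and some cell of `A` is
contained in no cell of `C`. -/
theorem minimal_factor_incomparable {Ω : Type*} (A B : Set (Set Ω))
    (hA : IsPartition A) (hB : IsPartition B) (hAfin : A.Finite) (hBfin : B.Finite)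
    (href : Refines B A) (hne : B ≠ A) (hA2 : 2 ≤ A.ncard)
    (C : Set (Set Ω)) (hC : IsMinimalFactor A B C) :
    C ≠ A ∧ (∃ c ∈ C, ∀ a ∈ A, ¬ c ⊆ a) ∧ (∃ a ∈ A, ∀ c ∈ C, ¬ a ⊆ c) := by
  obtain ⟨hCpart, hprod, hmin⟩ := hC
  have hBcover : ∀ x : Ω, ∃ b ∈ B, x ∈ b := by
    intro x
    have : x ∈ ⋃₀ B := by rw [hB.2.2]; trivial
    simpa using this
  -- Claim 3
  have claim3 : ∃ a ∈ A, ∀ c ∈ C, ¬ a ⊆ c := by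
    by_contra h
    push_neg at h
    refine hne ?_
    rw [← hprod]
    ext s
    constructor
    · rintro ⟨hs, a, ha, c, hc, rfl⟩
      obtain ⟨c', hc', hac'⟩ := h a ha
      rcases eq_or_ne c c' with rfl | hcc
      · rwa [Set.inter_eq_left.mpr hac']
      · exfalso
        obtain ⟨y, hy1, hy2⟩ := hs
        have : y ∈ c ∩ c' := ⟨hy2, hac' hy1⟩
        rw [hCpart.2.1 c hc c' hc' hcc] at this
        exact this
    · intro haA
      obtain ⟨c', hc', hac'⟩ := h s haA
      exact ⟨hA.1 s haA, s, haA, c', hc', (Set.inter_eq_left.mpr hac').symm⟩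
  -- Claim 2
  have claim2 : ∃ c ∈ C, ∀ a ∈ A, ¬ c ⊆ a := by
    by_contra h
    push_neg at h
    -- then partProd A C = C
    have hPC : partProd A C = C := by
      ext s
      constructor
      · rintro ⟨hs, a, ha, c, hc, rfl⟩
        obtain ⟨a', ha', hca'⟩ := h c hc
        rcases eq_or_ne a a' with rfl | haa
        · rwa [Set.inter_eq_right.mpr hca']
        · exfalso
          obtain ⟨y, hy1, hy2⟩ := hs
          have : y ∈ a ∩ a' := ⟨hy1, hca' hy2⟩
          rw [hA.2.1 a ha a' ha' haa] at this
          exact this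
      · intro hcC
        obtain ⟨a', ha', hca'⟩ := h s hcC
        exact ⟨hCpart.1 s hcC, a', ha', s, hcC, (Set.inter_eq_right.mpr hca').symm⟩
    have hCeqB : C = B := hPC ▸ hprod
    -- pick two distinct cells of A
    obtain ⟨a₀, a₁, ha₀, ha₁, ha01⟩ := (Set.one_lt_ncard_iff hAfin).mp (by omega)
    obtain ⟨x₀, hx₀⟩ := hA.1 a₀ ha₀
    obtain ⟨x₁, hx₁⟩ := hA.1 a₁ ha₁
    obtain ⟨b₁, hb₁B, hx₀b⟩ := hBcover x₀
    obtain ⟨b₃, hb₃B, hx₁b⟩ := hBcover x₁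
    have hb₁a : b₁ ⊆ a₀ := part_cell_subset hA href ha₀ hb₁B hx₀b hx₀
    have hb₃a : b₃ ⊆ a₁ := part_cell_subset hA href ha₁ hb₃B hx₁b hx₁
    have hb13 : b₁ ≠ b₃ := by
      rintro rfl
      have : x₀ ∈ a₀ ∩ a₁ := ⟨hx₀, hb₃a hx₀b⟩
      rw [hA.2.1 a₀ ha₀ a₁ ha₁ ha01] at this
      exact this
    set m : Set Ω := b₁ ∪ b₃ with hm
    set D : Set (Set Ω) := insert m (B \ {b₁, b₃}) with hD
    -- basic facts about m
    have hma₀ : a₀ ∩ m = b₁ := by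
      apply Set.Subset.antisymm
      · rintro y ⟨hya, hyb₁ | hyb₃⟩
        · exact hyb₁
        · exfalso
          have : y ∈ a₀ ∩ a₁ := ⟨hya, hb₃a hyb₃⟩
          rw [hA.2.1 a₀ ha₀ a₁ ha₁ ha01] at this
          exact this
      · intro y hy; exact ⟨hb₁a hy, Or.inl hy⟩
    have hma₁ : a₁ ∩ m = b₃ := by
      apply Set.Subset.antisymm
      · rintro y ⟨hya, hyb₁ | hyb₃⟩
        · exfalso
          have : y ∈ a₀ ∩ a₁ := ⟨hb₁a hyb₁, hya⟩
          rw [hA.2.1 a₀ ha₀ a₁ ha₁ ha01] at this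
          exact this
        · exact hyb₃
      · intro y hy; exact ⟨hb₃a hy, Or.inr hy⟩
    have hdisj : ∀ b ∈ B, b ≠ b₁ → b ≠ b₃ → m ∩ b = ∅ := by
      intro b hb hne1 hne3
      rw [hm, Set.union_inter_distrib_right,
        hB.2.1 b₁ hb₁B b hb (Ne.symm hne1), hB.2.1 b₃ hb₃B b hb (Ne.symm hne3)]
      simp
    -- D is a partition
    have hDpart : IsPartition D := by
      refine ⟨?_, ?_, ?_⟩
      · rintro d (rfl | ⟨hdB, _⟩)
        · exact ⟨x₀, Or.inl hx₀b⟩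
        · exact hB.1 d hdB
      · rintro d (rfl | ⟨hdB, hdne⟩) e (rfl | ⟨heB, hene⟩) hde
        · exact absurd rfl hde
        · simp only [Set.mem_singleton_iff, Set.mem_insert_iff, not_or] at hene
          exact hdisj e heB hene.1 hene.2
        · simp only [Set.mem_singleton_iff, Set.mem_insert_iff, not_or] at hdne
          rw [Set.inter_comm]
          exact hdisj d hdB hdne.1 hdne.2
        · exact hB.2.1 d hdB e heB hde
      · apply Set.eq_univ_of_forall
        intro x
        obtain ⟨b, hbB, hxb⟩ := hBcover x
        rcases eq_or_ne b b₁ with rfl | hne1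
        · exact Set.mem_sUnion.mpr ⟨m, Or.inl rfl, Or.inl hxb⟩
        rcases eq_or_ne b b₃ with rfl | hne3
        · exact Set.mem_sUnion.mpr ⟨m, Or.inl rfl, Or.inr hxb⟩
        · exact Set.mem_sUnion.mpr ⟨b, Or.inr ⟨hbB, by simp [hne1, hne3]⟩, hxb⟩
    -- partProd A D = B
    have hDprod : partProd A D = B := by
      ext s
      constructor
      · rintro ⟨hs, a, ha, d, hd, rfl⟩
        rcases hd with rfl | ⟨hdB, hdne⟩
        · obtain ⟨y, hya, hym⟩ := hs
          rcases hym with hyb₁ | hyb₃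
          · have haeq : a = a₀ := by
              by_contra hcon
              have : y ∈ a ∩ a₀ := ⟨hya, hb₁a hyb₁⟩
              rw [hA.2.1 a ha a₀ ha₀ hcon] at this
              exact this
            rw [haeq, hma₀]; exact hb₁B
          · have haeq : a = a₁ := by
              by_contra hcon
              have : y ∈ a ∩ a₁ := ⟨hya, hb₃a hyb₃⟩
              rw [hA.2.1 a ha a₁ ha₁ hcon] at this
              exact this
            rw [haeq, hma₁]; exact hb₃B
        · obtain ⟨a', ha', hda'⟩ := href d hdB
          obtain ⟨y, hya, hyd⟩ := hs
          have haeq : a = a' := by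
            by_contra hcon
            have : y ∈ a ∩ a' := ⟨hya, hda' hyd⟩
            rw [hA.2.1 a ha a' ha' hcon] at this
            exact this
          rw [haeq, Set.inter_eq_right.mpr hda']
          exact hdB
      · intro hbB
        rcases eq_or_ne s b₁ with rfl | hne1
        · exact ⟨⟨x₀, hx₀b⟩, a₀, ha₀, m, Or.inl rfl, hma₀.symm⟩
        rcases eq_or_ne s b₃ with rfl | hne3
        · exact ⟨⟨x₁, hx₁b⟩, a₁, ha₁, m, Or.inl rfl, hma₁.symm⟩
        · obtain ⟨a', ha', hsa'⟩ := href s hbB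
          exact ⟨hB.1 s hbB, a', ha', s, Or.inr ⟨hbB, by simp [hne1, hne3]⟩,
            (Set.inter_eq_right.mpr hsa').symm⟩
    -- cardinality
    have hmnot : m ∉ B \ {b₁, b₃} := by
      rintro ⟨hmB, hmne⟩
      simp only [Set.mem_singleton_iff, Set.mem_insert_iff, not_or] at hmne
      have := hdisj m hmB hmne.1 hmne.2
      rw [Set.inter_self] at this
      exact (hB.1 m hmB).ne_empty this
    have hsub : {b₁, b₃} ⊆ B := by
      rintro b (rfl | rfl)
      · exact hb₁B
      · exact hb₃B
    have hB2 : 2 ≤ B.ncard := by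
      have := (Set.one_lt_ncard_iff hBfin).mpr ⟨b₁, b₃, hb₁B, hb₃B, hb13⟩
      omega
    have hcard : D.ncard < B.ncard := by
      rw [hD, Set.ncard_insert_of_notMem hmnot hBfin.diff,
        Set.ncard_diff hsub (Set.toFinite _), Set.ncard_pair hb13]
      omega
    exact hmin D hDpart hDprod (by rwa [hCeqB])
  refine ⟨?_, claim2, claim3⟩
  rintro rfl
  obtain ⟨c, hcC, hc⟩ := claim2
  exact hc c hcC subset_rfl
end

section
/- Let P : Ω → 𝒫 and F : Ω → ℱ be random variables on a finite probability space (Ω, ℙ), with 𝒫 and ℱ finite, and assume ℙ(P = p) > 0 for every p ∈ 𝒫. Then for every p ∈ 𝒫 and every f ∈ ℱ, the conditional probability of F = f given that P lies in the causal equivalence class of p equals the conditional probability of F = f given P = p; that is, ℙ(F = f | ε(P) = ε(p)) = ℙ(F = f | P = p). -/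
open scoped BigOperators
attribute [local instance] Classical.propDecidable

/-- Probability of an event on a finite probability space given by a weight function. -/
noncomputable def prb {Ω : Type*} [Fintype Ω] (μ : Ω → ℝ) (E : Set Ω) : ℝ :=
  ∑ ω, if ω ∈ E then μ ω else 0

/-- Conditional probability `ℙ(E | F)`. -/
noncomputable def cprob {Ω : Type*} [Fintype Ω] (μ : Ω → ℝ) (E F : Set Ω) : ℝ :=
  prb μ (E ∩ F) / prb μ F

/-- Causal equivalence of pasts: `p ∼ p'` iff they give the same conditional
distribution over futures. -/
def CausalEquiv {Ω Pst Fut : Type*} [Fintype Ω] (μ : Ω → ℝ)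
    (P : Ω → Pst) (F : Ω → Fut) (p p' : Pst) : Prop :=
  ∀ f : Fut, cprob μ {ω | F ω = f} {ω | P ω = p} = cprob μ {ω | F ω = f} {ω | P ω = p'}

/-- Causal equivalence as a setoid on the space of pasts. -/
def causalSetoid {Ω Pst Fut : Type*} [Fintype Ω] (μ : Ω → ℝ)
    (P : Ω → Pst) (F : Ω → Fut) : Setoid Pst where
  r := CausalEquiv μ P F
  iseqv := ⟨fun _ _ => rfl, fun h f => (h f).symm, fun h h' f => (h f).trans (h' f)⟩

/-- The causal state map `ε` sends a past to its causal equivalence class. -/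
def causalState {Ω Pst Fut : Type*} [Fintype Ω] (μ : Ω → ℝ)
    (P : Ω → Pst) (F : Ω → Fut) (p : Pst) : Quotient (causalSetoid μ P F) :=
  Quotient.mk (causalSetoid μ P F) p

/-- Nonnegativity of `prb`. -/
lemma prb_nonneg {Ω : Type*} [Fintype Ω] (μ : Ω → ℝ) (hμ0 : ∀ ω, 0 ≤ μ ω) (E : Set Ω) :
    0 ≤ prb μ E := by
  refine Finset.sum_nonneg fun ω _ => ?_
  split
  · exact hμ0 ω
  · exact le_rfl

/-- Fiberwise decomposition of a sum over Ω. -/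
lemma sum_fiber {Ω Pst : Type*} [Fintype Ω] [Fintype Pst] (P : Ω → Pst) (h : Ω → ℝ) :
    ∑ ω, h ω = ∑ p' : Pst, ∑ ω, if P ω = p' then h ω else 0 := by
  rw [Finset.sum_comm]
  refine Finset.sum_congr rfl fun ω _ => ?_
  rw [Finset.sum_ite_eq (Finset.univ : Finset Pst) (P ω) (fun _ => h ω)]
  simp

/-- conditioning the future on the causal state of a past gives the same
conditional probabilities as conditioning on the past itself:
`ℙ(F = f | ε(P) = ε(p)) = ℙ(F = f | P = p)`. -/
theorem condProb_given_causalState {Ω Pst Fut : Type*} [Fintype Ω] [Fintype Pst] [Fintype Fut]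
    (μ : Ω → ℝ) (hμ0 : ∀ ω, 0 ≤ μ ω) (hμ1 : ∑ ω, μ ω = 1)
    (P : Ω → Pst) (F : Ω → Fut)
    (hP : ∀ p : Pst, 0 < prb μ {ω | P ω = p}) :
    ∀ (p : Pst) (f : Fut),
      cprob μ {ω | F ω = f}
        {ω | causalState μ P F (P ω) = causalState μ P F p} =
      cprob μ {ω | F ω = f} {ω | P ω = p} := by
  intro p f
  set c : ℝ := cprob μ {ω | F ω = f} {ω | P ω = p} with hc
  -- for equivalent pasts, the fiber numerator equals c times the fiber mass
  have hkey : ∀ p' : Pst, causalState μ P F p' = causalState μ P F p →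
      prb μ ({ω | F ω = f} ∩ {ω | P ω = p'}) = c * prb μ {ω | P ω = p'} := by
    intro p' hp'
    have hequiv : CausalEquiv μ P F p' p := Quotient.eq''.mp hp'
    have : cprob μ {ω | F ω = f} {ω | P ω = p'} = c := (hequiv f).symm ▸ rfl
    have h' := this
    rw [cprob] at h'
    field_simp [(hP p').ne'] at h'
    linarith [h']
  -- decompose numerator and denominator fiberwise
  have hnum : prb μ ({ω | F ω = f} ∩ {ω | causalState μ P F (P ω) = causalState μ P F p})
      = ∑ p' : Pst, if causalState μ P F p' = causalState μ P F p
          then prb μ ({ω | F ω = f} ∩ {ω | P ω = p'}) else 0 := by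
    rw [prb, sum_fiber P]
    refine Finset.sum_congr rfl fun p' _ => ?_
    rw [prb]
    by_cases hp' : causalState μ P F p' = causalState μ P F p
    · simp only [hp', if_true]
      refine Finset.sum_congr rfl fun ω _ => ?_
      by_cases h1 : P ω = p' <;> simp [h1, hp', Set.mem_setOf_eq]
    · simp only [hp', if_false]
      refine Finset.sum_eq_zero fun ω _ => ?_
      by_cases h1 : P ω = p' <;> simp [h1, hp', Set.mem_setOf_eq]
  have hden : prb μ {ω | causalState μ P F (P ω) = causalState μ P F p}
      = ∑ p' : Pst, if causalState μ P F p' = causalState μ P F p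
          then prb μ {ω | P ω = p'} else 0 := by
    rw [prb, sum_fiber P]
    refine Finset.sum_congr rfl fun p' _ => ?_
    rw [prb]
    by_cases hp' : causalState μ P F p' = causalState μ P F p
    · simp only [hp', if_true]
      refine Finset.sum_congr rfl fun ω _ => ?_
      by_cases h1 : P ω = p' <;> simp [h1, hp', Set.mem_setOf_eq]
    · simp only [hp', if_false]
      refine Finset.sum_eq_zero fun ω _ => ?_
      by_cases h1 : P ω = p' <;> simp [h1, hp', Set.mem_setOf_eq]
  have hnum' : prb μ ({ω | F ω = f} ∩ {ω | causalState μ P F (P ω) = causalState μ P F p})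
      = c * prb μ {ω | causalState μ P F (P ω) = causalState μ P F p} := by
    rw [hnum, hden, Finset.mul_sum]
    refine Finset.sum_congr rfl fun p' _ => ?_
    by_cases hp' : causalState μ P F p' = causalState μ P F p
    · simp [hp', hkey p' hp']
    · simp [hp']
  have hdpos : 0 < prb μ {ω | causalState μ P F (P ω) = causalState μ P F p} := by
    rw [hden]
    calc (0:ℝ) < prb μ {ω | P ω = p} := hP p
    _ = (if causalState μ P F p = causalState μ P F p
          then prb μ {ω | P ω = p} else 0) := by simp
    _ ≤ _ := by
        refine Finset.single_le_sum (f := fun p' => if causalState μ P F p' = causalState μ P F p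
          then prb μ {ω | P ω = p'} else 0) (fun p' _ => ?_) (Finset.mem_univ p)
        split
        · exact (hP p').le
        · exact le_rfl
  rw [cprob, hnum', mul_div_assoc, div_self hdpos.ne', mul_one]
end

section
/- Let P : Ω → 𝒫 and F : Ω → ℱ be random variables on a finite probability space (Ω, ℙ), with 𝒫 and ℱ finite, and assume ℙ(P = p) > 0 for every p ∈ 𝒫. Then the causal states are prescient: the mutual information between the future and the causal state equals the mutual information between the future and the past, I[F; ε∘P] = I[F; P]. -/
open scoped BigOperators
attribute [local instance] Classical.propDecidable

/-- The distribution of a random variable `X`. -/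
noncomputable def pdist {Ω α : Type*} [Fintype Ω] (μ : Ω → ℝ) (X : Ω → α) (x : α) : ℝ :=
  prb μ {ω | X ω = x}

/-- Shannon entropy `H[X]` (in nats; `Real.log 0 = 0` gives the convention `0·log 0 = 0`). -/
noncomputable def Hent {Ω α : Type*} [Fintype Ω] [Fintype α] (μ : Ω → ℝ) (X : Ω → α) : ℝ :=
  -∑ x, pdist μ X x * Real.log (pdist μ X x)

/-- Mutual information `I[X;Y] = H[X] + H[Y] - H[X,Y]`. -/
noncomputable def Iinfo {Ω α β : Type*} [Fintype Ω] [Fintype α] [Fintype β]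
    (μ : Ω → ℝ) (X : Ω → α) (Y : Ω → β) : ℝ :=
  Hent μ X + Hent μ Y - Hent μ (fun ω => (X ω, Y ω))

/-- Conditional entropy `H[X|Y] = H[X,Y] - H[Y]`. -/
noncomputable def condH {Ω α β : Type*} [Fintype Ω] [Fintype α] [Fintype β]
    (μ : Ω → ℝ) (X : Ω → α) (Y : Ω → β) : ℝ :=
  Hent μ (fun ω => (X ω, Y ω)) - Hent μ Y

section AuxLemmas

variable {Ω Pst Fut : Type*} [Fintype Ω] [Fintype Pst] [Fintype Fut]

lemma mul_log_mul_split (a b : ℝ) :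
    a * b * Real.log (a * b) = a * b * Real.log a + a * b * Real.log b := by
  rcases eq_or_ne a 0 with h | h
  · simp [h]
  rcases eq_or_ne b 0 with h' | h'
  · simp [h']
  rw [Real.log_mul h h']; ring

lemma pdist_comp (μ : Ω → ℝ) {α β : Type*} [Fintype α] [Fintype β]
    (X : Ω → α) (g : α → β) (b : β) :
    pdist μ (fun ω => g (X ω)) b = ∑ a, if g a = b then pdist μ X a else 0 := by
  classical
  unfold pdist prb
  have h1 : ∀ a : α,
      (if g a = b then ∑ ω, (if ω ∈ {ω | X ω = a} then μ ω else 0) else 0)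
      = ∑ ω, if X ω = a then (if g a = b then μ ω else 0) else 0 := by
    intro a; split_ifs with h
    · simp [Set.mem_setOf_eq]
    · simp
  simp only [h1]
  rw [Finset.sum_comm]
  refine Finset.sum_congr rfl fun ω _ => ?_
  rw [Finset.sum_ite_eq Finset.univ (X ω) (fun a => if g a = b then μ ω else 0)]
  simp [Set.mem_setOf_eq]

lemma pdist_pair_eq (μ : Ω → ℝ) (F : Ω → Fut) (P : Ω → Pst) (f : Fut) (p : Pst) :
    pdist μ (fun ω => (F ω, P ω)) (f, p) = prb μ ({ω | F ω = f} ∩ {ω | P ω = p}) := by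
  unfold pdist
  congr 1
  ext ω
  simp [Set.mem_setOf_eq, Prod.ext_iff]

lemma sum_prb_inter (μ : Ω → ℝ) (F : Ω → Fut) (P : Ω → Pst) (p : Pst) :
    ∑ f, prb μ ({ω | F ω = f} ∩ {ω | P ω = p}) = prb μ {ω | P ω = p} := by
  classical
  unfold prb
  rw [Finset.sum_comm]
  refine Finset.sum_congr rfl fun ω _ => ?_
  simp only [Set.mem_inter_iff, Set.mem_setOf_eq, ite_and]
  simp [Finset.sum_ite_eq]

lemma sum_cprob_eq_one (μ : Ω → ℝ) (F : Ω → Fut) (P : Ω → Pst) (p : Pst)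
    (hp : 0 < prb μ {ω | P ω = p}) :
    ∑ f, cprob μ {ω | F ω = f} {ω | P ω = p} = 1 := by
  unfold cprob
  rw [← Finset.sum_div, sum_prb_inter, div_self hp.ne']

lemma joint_factor (μ : Ω → ℝ) (F : Ω → Fut) (P : Ω → Pst) (f : Fut) (p : Pst)
    (hp : 0 < prb μ {ω | P ω = p}) :
    pdist μ (fun ω => (F ω, P ω)) (f, p)
      = cprob μ {ω | F ω = f} {ω | P ω = p} * pdist μ P p := by
  rw [pdist_pair_eq]
  unfold cprob pdist
  rw [div_mul_cancel₀]
  exact hp.ne'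

lemma hent_pair_factor (μ : Ω → ℝ) {β : Type*} [Fintype β]
    (F : Ω → Fut) (Y : Ω → β) (r : Fut → β → ℝ)
    (hfac : ∀ f y, pdist μ (fun ω => (F ω, Y ω)) (f, y) = r f y * pdist μ Y y)
    (hsum : ∀ y, ∑ f, r f y = 1) :
    Hent μ (fun ω => (F ω, Y ω))
      = Hent μ Y - ∑ y, ∑ f, pdist μ Y y * r f y * Real.log (r f y) := by
  unfold Hent
  rw [Fintype.sum_prod_type]
  have h1 : ∀ f y, pdist μ (fun ω => (F ω, Y ω)) (f, y)
      * Real.log (pdist μ (fun ω => (F ω, Y ω)) (f, y))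
      = r f y * pdist μ Y y * Real.log (r f y)
        + r f y * pdist μ Y y * Real.log (pdist μ Y y) := by
    intro f y
    rw [hfac f y, mul_log_mul_split]
  simp only [h1, Finset.sum_add_distrib]
  have h2 : ∑ f, ∑ y, r f y * pdist μ Y y * Real.log (pdist μ Y y)
      = ∑ y, pdist μ Y y * Real.log (pdist μ Y y) := by
    rw [Finset.sum_comm]
    refine Finset.sum_congr rfl fun y _ => ?_
    have : ∑ f, r f y * (pdist μ Y y * Real.log (pdist μ Y y))
        = (∑ f, r f y) * (pdist μ Y y * Real.log (pdist μ Y y)) := by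
      rw [Finset.sum_mul]
    calc ∑ f, r f y * pdist μ Y y * Real.log (pdist μ Y y)
        = (∑ f, r f y) * (pdist μ Y y * Real.log (pdist μ Y y)) := by
          rw [← this]; refine Finset.sum_congr rfl fun f _ => by ring
      _ = pdist μ Y y * Real.log (pdist μ Y y) := by rw [hsum y, one_mul]
  rw [h2]
  have h3 : ∑ f, ∑ y, r f y * pdist μ Y y * Real.log (r f y)
      = ∑ y, ∑ f, pdist μ Y y * r f y * Real.log (r f y) := by
    rw [Finset.sum_comm]
    exact Finset.sum_congr rfl fun y _ => Finset.sum_congr rfl fun f _ => by ring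
  rw [h3]; ring

end AuxLemmas
/-- the causal states are prescient: `I[F; ε∘P] = I[F; P]`. -/
theorem causal_states_prescient {Ω Pst Fut : Type*} [Fintype Ω] [Fintype Pst] [Fintype Fut]
    (μ : Ω → ℝ) (hμ0 : ∀ ω, 0 ≤ μ ω) (hμ1 : ∑ ω, μ ω = 1)
    (P : Ω → Pst) (F : Ω → Fut)
    (hP : ∀ p : Pst, 0 < prb μ {ω | P ω = p}) :
    Iinfo μ F (fun ω => causalState μ P F (P ω)) = Iinfo μ F P := by
  classical
  set ε : Pst → Quotient (causalSetoid μ P F) := causalState μ P F with hε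
  set Q : Fut → Quotient (causalSetoid μ P F) → ℝ :=
    fun f s => cprob μ {ω | F ω = f} {ω | P ω = Quotient.out s} with hQ
  -- Q is well defined on classes
  have hQmk : ∀ (f : Fut) (p : Pst),
      Q f (ε p) = cprob μ {ω | F ω = f} {ω | P ω = p} := by
    intro f p
    have hrel : CausalEquiv μ P F (Quotient.out (ε p)) p := by
      have := Quotient.exact (s := causalSetoid μ P F) (Quotient.out_eq (ε p))
      exact this
    exact hrel f
  have hQsum : ∀ s, ∑ f, Q f s = 1 := fun s =>
    sum_cprob_eq_one μ F P (Quotient.out s) (hP _)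
  -- distribution of the causal state
  have hSdist : ∀ s, pdist μ (fun ω => ε (P ω)) s
      = ∑ p, if ε p = s then pdist μ P p else 0 := by
    intro s
    rw [pdist_comp μ P ε s]
    exact Finset.sum_congr rfl fun p _ => by by_cases h : ε p = s <;> simp [h]
  -- factorization for P
  have hfacP : ∀ f p, pdist μ (fun ω => (F ω, P ω)) (f, p)
      = Q f (ε p) * pdist μ P p := by
    intro f p
    rw [hQmk]
    exact joint_factor μ F P f p (hP p)
  -- factorization for the causal state
  have hfacS : ∀ f s, pdist μ (fun ω => (F ω, ε (P ω))) (f, s)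
      = Q f s * pdist μ (fun ω => ε (P ω)) s := by
    intro f s
    rw [pdist_comp μ (fun ω => (F ω, P ω)) (fun a => (a.1, ε a.2)) (f, s),
      Fintype.sum_prod_type]
    simp only [Prod.mk.injEq, ite_and]
    rw [show (∑ f' : Fut, ∑ p : Pst, if f' = f then
          (if ε p = s then pdist μ (fun ω => (F ω, P ω)) (f', p) else 0) else 0)
        = ∑ p : Pst, (if ε p = s then pdist μ (fun ω => (F ω, P ω)) (f, p) else 0) by
      simp [Finset.sum_ite_eq']]
    have h3 : (∑ p : Pst, (if ε p = s then pdist μ (fun ω => (F ω, P ω)) (f, p) else 0))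
        = ∑ p : Pst, Q f s * (if ε p = s then pdist μ P p else 0) :=
      Finset.sum_congr rfl fun p _ => by
        by_cases h : ε p = s
        · simp only [h, if_true]; rw [hfacP, h]
        · simp [h]
    rw [h3, ← Finset.mul_sum, hSdist]
  -- entropy decompositions
  have hHP : Hent μ (fun ω => (F ω, P ω))
      = Hent μ P - ∑ p, ∑ f, pdist μ P p * Q f (ε p) * Real.log (Q f (ε p)) :=
    hent_pair_factor μ F P (fun f p => Q f (ε p)) hfacP
      (fun p => by rw [show (∑ f, Q f (ε p)) = 1 from hQsum (ε p)])
  have hHS : Hent μ (fun ω => (F ω, ε (P ω)))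
      = Hent μ (fun ω => ε (P ω))
        - ∑ s, ∑ f, pdist μ (fun ω => ε (P ω)) s * Q f s * Real.log (Q f s) :=
    hent_pair_factor μ F (fun ω => ε (P ω)) Q hfacS hQsum
  -- regrouping
  have hregroup : ∑ s, ∑ f, pdist μ (fun ω => ε (P ω)) s * Q f s * Real.log (Q f s)
      = ∑ p, ∑ f, pdist μ P p * Q f (ε p) * Real.log (Q f (ε p)) := by
    have h1 : ∀ s, ∑ f, pdist μ (fun ω => ε (P ω)) s * Q f s * Real.log (Q f s)
        = ∑ f, ∑ p, (if ε p = s then pdist μ P p * Q f (ε p) * Real.log (Q f (ε p)) else 0) := by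
      intro s
      refine Finset.sum_congr rfl fun f _ => ?_
      rw [hSdist, Finset.sum_mul, Finset.sum_mul]
      refine Finset.sum_congr rfl fun p _ => ?_
      split_ifs with h
      · rw [h]
      · simp
    simp only [h1]
    rw [Finset.sum_comm]
    calc ∑ f, ∑ s, ∑ p,
          (if ε p = s then pdist μ P p * Q f (ε p) * Real.log (Q f (ε p)) else 0)
        = ∑ f, ∑ p, pdist μ P p * Q f (ε p) * Real.log (Q f (ε p)) := by
          refine Finset.sum_congr rfl fun f _ => ?_
          rw [Finset.sum_comm]
          refine Finset.sum_congr rfl fun p _ => ?_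
          simp [Finset.sum_ite_eq]
      _ = ∑ p, ∑ f, pdist μ P p * Q f (ε p) * Real.log (Q f (ε p)) := Finset.sum_comm
  unfold Iinfo
  rw [hHP, hHS, hregroup]
  ring
end

section
/- Let 𝒜 be a finite type, let π be a probability distribution on 𝒜, and let T : 𝒜 × 𝒜 → [0,1] be a stochastic matrix (∑_t T(s,t) = 1 for all s) for which π is stationary (∑_s π(s) T(s,t) = π(t) for all t). Fix n ≥ 1 and let (S_0, S_1, …, S_n) be random variables whose joint distribution is ℙ(S_0 = s_0, …, S_n = s_n) = π(s_0) · ∏_{i=0}^{n-1} T(s_i, s_{i+1}) (a stationary first-order Markov chain). Then the statistical complexity decomposes as the sum of the predictive information and the entropy rate: H[S_0] = I[(S_1, …, S_n); S_0] + H[S_1 | S_0]. -/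
open scoped BigOperators
attribute [local instance] Classical.propDecidable

noncomputable def chainDist {A : Type*} [Fintype A] (n : ℕ) (π : A → ℝ) (T : A → A → ℝ) :
    (Fin (n + 1) → A) → ℝ :=
  fun ω => π (ω 0) * ∏ i : Fin n, T (ω i.castSucc) (ω i.succ)

section aux
variable {A : Type*} [Fintype A] (π : A → ℝ) (T : A → A → ℝ)

lemma sum_snoc {M : Type*} [AddCommMonoid M] (m : ℕ) (F : (Fin (m+1) → A) → M) :
    ∑ ω : Fin (m+1) → A, F ω = ∑ g : Fin m → A, ∑ t : A, F (Fin.snoc g t) := by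
  rw [← Equiv.sum_comp (Fin.snocEquiv (fun _ => A)) F, Fintype.sum_prod_type]
  rw [Finset.sum_comm]
  rfl

lemma sum_cons {M : Type*} [AddCommMonoid M] (m : ℕ) (F : (Fin (m+1) → A) → M) :
    ∑ ω : Fin (m+1) → A, F ω = ∑ f : Fin m → A, ∑ s : A, F (Fin.cons s f) := by
  rw [← Equiv.sum_comp (Fin.consEquiv (fun _ => A)) F, Fintype.sum_prod_type]
  rw [Finset.sum_comm]
  rfl

lemma chain_snoc (m : ℕ) (g : Fin (m+1) → A) (t : A) :
    chainDist (m+1) π T (Fin.snoc g t) = chainDist m π T g * T (g (Fin.last m)) t := by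
  unfold chainDist
  rw [Fin.prod_univ_castSucc]
  have h0 : (Fin.snoc g t : Fin (m+2) → A) 0 = g 0 := by
    have : (0 : Fin (m+2)) = Fin.castSucc (0 : Fin (m+1)) := rfl
    rw [this, Fin.snoc_castSucc]
  simp only [h0, Fin.succ_castSucc, Fin.snoc_castSucc, Fin.succ_last, Fin.snoc_last]
  ring

lemma chain_cons (m : ℕ) (s : A) (f : Fin (m+1) → A) :
    chainDist (m+1) π T (Fin.cons s f) =
      π s * T s (f 0) * ∏ i : Fin m, T (f i.castSucc) (f i.succ) := by
  unfold chainDist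
  rw [Fin.prod_univ_succ]
  simp only [Fin.castSucc_zero, Fin.cons_zero, ← Fin.succ_castSucc, Fin.cons_succ]
  ring

lemma chain_nonneg (hπ0 : ∀ s, 0 ≤ π s) (hT0 : ∀ s t, 0 ≤ T s t) (m : ℕ)
    (ω : Fin (m+1) → A) : 0 ≤ chainDist m π T ω :=
  mul_nonneg (hπ0 _) (Finset.prod_nonneg fun _ _ => hT0 _ _)

lemma mul_log_split (a b : ℝ) (ha : 0 ≤ a) (hb : 0 ≤ b) :
    a * b * Real.log (a * b) = b * (a * Real.log a) + a * (b * Real.log b) := by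
  rcases eq_or_lt_of_le ha with h | h
  · simp [← h]
  rcases eq_or_lt_of_le hb with h' | h'
  · simp [← h']
  rw [Real.log_mul h.ne' h'.ne']
  ring

lemma chain_first (hTrow : ∀ s, ∑ t, T s t = 1) (m : ℕ) (φ : A → ℝ) :
    ∑ ω : Fin (m+1) → A, chainDist m π T ω * φ (ω 0) = ∑ s, π s * φ s := by
  induction m with
  | zero =>
      rw [← Equiv.sum_comp (Equiv.funUnique (Fin 1) A).symm
        (fun ω => chainDist 0 π T ω * φ (ω 0))]
      simp [chainDist]
  | succ m ih =>
      rw [sum_snoc]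
      have : ∀ (g : Fin (m+1) → A), ∑ t, chainDist (m+1) π T (Fin.snoc g t)
          * φ ((Fin.snoc g t : Fin (m+2) → A) 0) = chainDist m π T g * φ (g 0) := by
        intro g
        have h0 : ∀ t : A, (Fin.snoc g t : Fin (m+2) → A) 0 = g 0 := by
          intro t
          have : (0 : Fin (m+2)) = Fin.castSucc (0 : Fin (m+1)) := rfl
          rw [this, Fin.snoc_castSucc]
        simp only [h0, chain_snoc]
        rw [← Finset.sum_mul]
        rw [show ∑ t, chainDist m π T g * T (g (Fin.last m)) t
            = chainDist m π T g * ∑ t, T (g (Fin.last m)) t by rw [Finset.mul_sum],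
          hTrow, mul_one]
      rw [Finset.sum_congr rfl fun g _ => this g, ih]

lemma chain_last (hTrow : ∀ s, ∑ t, T s t = 1)
    (hstat : ∀ t, ∑ s, π s * T s t = π t) (m : ℕ) (ψ : A → ℝ) :
    ∑ ω : Fin (m+1) → A, chainDist m π T ω * ψ (ω (Fin.last m)) = ∑ u, π u * ψ u := by
  induction m generalizing ψ with
  | zero =>
      rw [← Equiv.sum_comp (Equiv.funUnique (Fin 1) A).symm
        (fun ω => chainDist 0 π T ω * ψ (ω (Fin.last 0)))]
      simp [chainDist]
  | succ m ih =>
      rw [sum_snoc]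
      have step : ∀ (g : Fin (m+1) → A), ∑ t, chainDist (m+1) π T (Fin.snoc g t)
          * ψ ((Fin.snoc g t : Fin (m+2) → A) (Fin.last (m+1)))
          = chainDist m π T g * (∑ t, T (g (Fin.last m)) t * ψ t) := by
        intro g
        simp only [Fin.snoc_last, chain_snoc]
        rw [Finset.mul_sum]
        exact Finset.sum_congr rfl fun t _ => by ring
      rw [Finset.sum_congr rfl fun g _ => step g,
        ih (fun u => ∑ t, T u t * ψ t)]
      rw [show ∑ u, π u * ∑ t, T u t * ψ t = ∑ u, ∑ t, π u * T u t * ψ t by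
        exact Finset.sum_congr rfl fun u _ => by rw [Finset.mul_sum]; exact Finset.sum_congr rfl fun t _ => by ring]
      rw [Finset.sum_comm]
      exact Finset.sum_congr rfl fun t _ => by rw [← Finset.sum_mul, hstat]

lemma chain_pair (hTrow : ∀ s, ∑ t, T s t = 1) (m : ℕ) (φ : A → A → ℝ) :
    ∑ ω : Fin (m+2) → A, chainDist (m+1) π T ω * φ (ω 0) (ω 1)
      = ∑ s, ∑ t, π s * T s t * φ s t := by
  induction m with
  | zero =>
      rw [← Equiv.sum_comp (piFinTwoEquiv (fun _ => A)).symm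
        (fun ω => chainDist 1 π T ω * φ (ω 0) (ω 1)), Fintype.sum_prod_type]
      refine Finset.sum_congr rfl fun s _ => Finset.sum_congr rfl fun t _ => ?_
      simp [chainDist, Fin.prod_univ_one]
  | succ m ih =>
      rw [sum_snoc]
      have step : ∀ (g : Fin (m+2) → A), ∑ t, chainDist (m+2) π T (Fin.snoc g t)
          * φ ((Fin.snoc g t : Fin (m+3) → A) 0) ((Fin.snoc g t : Fin (m+3) → A) 1)
          = chainDist (m+1) π T g * φ (g 0) (g 1) := by
        intro g
        have h0 : ∀ t : A, (Fin.snoc g t : Fin (m+3) → A) 0 = g 0 := by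
          intro t
          have : (0 : Fin (m+3)) = Fin.castSucc (0 : Fin (m+2)) := rfl
          rw [this, Fin.snoc_castSucc]
        have h1 : ∀ t : A, (Fin.snoc g t : Fin (m+3) → A) 1 = g 1 := by
          intro t
          have : (1 : Fin (m+3)) = Fin.castSucc (1 : Fin (m+2)) := rfl
          rw [this, Fin.snoc_castSucc]
        simp only [h0, h1, chain_snoc]
        rw [show ∑ t, chainDist (m+1) π T g * T (g (Fin.last (m+1))) t * φ (g 0) (g 1)
            = (chainDist (m+1) π T g * φ (g 0) (g 1)) * ∑ t, T (g (Fin.last (m+1))) t by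
          rw [Finset.mul_sum]; exact Finset.sum_congr rfl fun t _ => by ring, hTrow, mul_one]
      rw [Finset.sum_congr rfl fun g _ => step g, ih]

lemma chain_entropy (hπ0 : ∀ s, 0 ≤ π s) (hT0 : ∀ s t, 0 ≤ T s t)
    (hTrow : ∀ s, ∑ t, T s t = 1) (hstat : ∀ t, ∑ s, π s * T s t = π t) (m : ℕ) :
    ∑ ω : Fin (m+1) → A, chainDist m π T ω * Real.log (chainDist m π T ω)
      = (∑ s, π s * Real.log (π s))
        + m * (∑ s, ∑ t, π s * (T s t * Real.log (T s t))) := by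
  induction m with
  | zero =>
      rw [← Equiv.sum_comp (Equiv.funUnique (Fin 1) A).symm
        (fun ω => chainDist 0 π T ω * Real.log (chainDist 0 π T ω))]
      simp [chainDist]
  | succ m ih =>
      rw [sum_snoc]
      have step : ∀ (g : Fin (m+1) → A), ∑ t, chainDist (m+1) π T (Fin.snoc g t)
          * Real.log (chainDist (m+1) π T (Fin.snoc g t))
          = chainDist m π T g * Real.log (chainDist m π T g)
            + chainDist m π T g * (∑ t, T (g (Fin.last m)) t * Real.log (T (g (Fin.last m)) t)) := by
        intro g
        simp only [chain_snoc]
        have : ∀ t : A, chainDist m π T g * T (g (Fin.last m)) t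
            * Real.log (chainDist m π T g * T (g (Fin.last m)) t)
            = T (g (Fin.last m)) t * (chainDist m π T g * Real.log (chainDist m π T g))
              + chainDist m π T g * (T (g (Fin.last m)) t * Real.log (T (g (Fin.last m)) t)) :=
          fun t => mul_log_split _ _ (chain_nonneg π T hπ0 hT0 m g) (hT0 _ _)
        rw [Finset.sum_congr rfl fun t _ => this t, Finset.sum_add_distrib,
          ← Finset.sum_mul, hTrow, one_mul, ← Finset.mul_sum]
      rw [Finset.sum_congr rfl fun g _ => step g, Finset.sum_add_distrib, ih,
        chain_last π T hTrow hstat m (fun u => ∑ t, T u t * Real.log (T u t))]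
      have : ∑ u, π u * ∑ t, T u t * Real.log (T u t)
          = ∑ s, ∑ t, π s * (T s t * Real.log (T s t)) :=
        Finset.sum_congr rfl fun u _ => Finset.mul_sum _ _ _
      rw [this]
      push_cast
      ring

lemma pdist_S0 (hTrow : ∀ s, ∑ t, T s t = 1) (m : ℕ) (s : A) :
    pdist (chainDist m π T) (fun ω => ω 0) s = π s := by
  unfold pdist prb
  simp only [Set.mem_setOf_eq]
  rw [show ∑ ω : Fin (m+1) → A, (if ω 0 = s then chainDist m π T ω else 0)
      = ∑ ω : Fin (m+1) → A, chainDist m π T ω * (if ω 0 = s then 1 else 0) by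
    exact Finset.sum_congr rfl fun ω _ => by split_ifs <;> simp]
  rw [chain_first π T hTrow m (fun x => if x = s then 1 else 0)]
  simp

lemma pdist_S1S0 (hTrow : ∀ s, ∑ t, T s t = 1) (m : ℕ) (t s : A) :
    pdist (chainDist (m+1) π T) (fun ω => (ω 1, ω 0)) (t, s) = π s * T s t := by
  unfold pdist prb
  simp only [Set.mem_setOf_eq]
  refine Eq.trans (Finset.sum_congr rfl fun ω _ => ?_)
    (Eq.trans (chain_pair π T hTrow m (fun a b => if (b, a) = (t, s) then 1 else 0)) ?_)
  · by_cases h : (ω 1, ω 0) = (t, s) <;> simp [h]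
  · simp only [Prod.mk.injEq, ite_and, mul_ite, mul_one, mul_zero]
    rw [Finset.sum_comm]
    simp [Finset.sum_ite_eq']

lemma tail_cons_eq (m : ℕ) (a : A) (g : Fin (m+1) → A) :
    (fun i : Fin (m+1) => (Fin.cons a g : Fin (m+2) → A) i.succ) = g := by
  funext i; simp

lemma pdist_F (hstat : ∀ t, ∑ s, π s * T s t = π t) (m : ℕ) (f : Fin (m+1) → A) :
    pdist (chainDist (m+1) π T) (fun ω => fun i : Fin (m+1) => ω i.succ) f
      = chainDist m π T f := by
  unfold pdist prb
  simp only [Set.mem_setOf_eq]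
  rw [sum_cons]
  simp only [tail_cons_eq]
  rw [Finset.sum_comm]
  simp only [Finset.sum_ite_eq', Finset.mem_univ, if_true]
  rw [Finset.sum_congr rfl fun a _ => chain_cons π T m a f]
  rw [show ∑ a : A, π a * T a (f 0) * ∏ i : Fin m, T (f i.castSucc) (f i.succ)
      = (∑ a : A, π a * T a (f 0)) * ∏ i : Fin m, T (f i.castSucc) (f i.succ) by
    rw [Finset.sum_mul], hstat]
  rfl

lemma pdist_FS0 (m : ℕ) (f : Fin (m+1) → A) (s : A) :
    pdist (chainDist (m+1) π T) (fun ω => ((fun i : Fin (m+1) => ω i.succ), ω 0)) (f, s)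
      = chainDist (m+1) π T (Fin.cons s f) := by
  unfold pdist prb
  simp only [Set.mem_setOf_eq]
  rw [sum_cons]
  simp only [tail_cons_eq, Fin.cons_zero, Prod.mk.injEq, ite_and]
  rw [Finset.sum_comm]
  simp [Finset.sum_ite_eq']

lemma Hent_S0 (hTrow : ∀ s, ∑ t, T s t = 1) (m : ℕ) :
    Hent (chainDist m π T) (fun ω => ω 0) = -∑ s, π s * Real.log (π s) := by
  unfold Hent
  simp only [pdist_S0 π T hTrow m]

lemma Hent_S1S0 (hπ0 : ∀ s, 0 ≤ π s) (hT0 : ∀ s t, 0 ≤ T s t)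
    (hTrow : ∀ s, ∑ t, T s t = 1) (m : ℕ) :
    Hent (chainDist (m+1) π T) (fun ω => (ω 1, ω 0))
      = -((∑ s, π s * Real.log (π s)) + ∑ s, ∑ t, π s * (T s t * Real.log (T s t))) := by
  unfold Hent
  rw [Fintype.sum_prod_type]
  simp only [pdist_S1S0 π T hTrow m]
  rw [Finset.sum_comm]
  have key : ∀ s, ∑ t, π s * T s t * Real.log (π s * T s t)
      = π s * Real.log (π s) + ∑ t, π s * (T s t * Real.log (T s t)) := by
    intro s
    have : ∀ t, π s * T s t * Real.log (π s * T s t)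
        = T s t * (π s * Real.log (π s)) + π s * (T s t * Real.log (T s t)) :=
      fun t => mul_log_split _ _ (hπ0 s) (hT0 s t)
    rw [Finset.sum_congr rfl fun t _ => this t, Finset.sum_add_distrib,
      ← Finset.sum_mul, hTrow, one_mul]
  rw [Finset.sum_congr rfl fun s _ => key s, Finset.sum_add_distrib]

lemma Hent_F (hπ0 : ∀ s, 0 ≤ π s) (hT0 : ∀ s t, 0 ≤ T s t)
    (hTrow : ∀ s, ∑ t, T s t = 1) (hstat : ∀ t, ∑ s, π s * T s t = π t) (m : ℕ) :
    Hent (chainDist (m+1) π T) (fun ω => fun i : Fin (m+1) => ω i.succ)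
      = -((∑ s, π s * Real.log (π s))
          + m * ∑ s, ∑ t, π s * (T s t * Real.log (T s t))) := by
  unfold Hent
  simp only [pdist_F π T hstat m]
  rw [chain_entropy π T hπ0 hT0 hTrow hstat m]

lemma Hent_FS0 (hπ0 : ∀ s, 0 ≤ π s) (hT0 : ∀ s t, 0 ≤ T s t)
    (hTrow : ∀ s, ∑ t, T s t = 1) (hstat : ∀ t, ∑ s, π s * T s t = π t) (m : ℕ) :
    Hent (chainDist (m+1) π T) (fun ω => ((fun i : Fin (m+1) => ω i.succ), ω 0))
      = -((∑ s, π s * Real.log (π s))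
          + (m + 1 : ℝ) * ∑ s, ∑ t, π s * (T s t * Real.log (T s t))) := by
  unfold Hent
  rw [Fintype.sum_prod_type]
  simp only [pdist_FS0 π T m]
  rw [← sum_cons (m+1) (fun ω => chainDist (m+1) π T ω * Real.log (chainDist (m+1) π T ω)),
    chain_entropy π T hπ0 hT0 hTrow hstat (m+1)]
  push_cast
  ring

end aux

/-- for a stationary first-order Markov chain `(S_0, …, S_n)`, `n ≥ 1`, the
statistical complexity decomposes as predictive information plus entropy rate:
`H[S_0] = I[(S_1, …, S_n); S_0] + H[S_1 | S_0]`. -/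
theorem markov_complexity_decomposition {A : Type*} [Fintype A]
    (π : A → ℝ) (T : A → A → ℝ)
    (hπ0 : ∀ s, 0 ≤ π s) (hπ1 : ∑ s, π s = 1)
    (hT0 : ∀ s t, 0 ≤ T s t) (hT1 : ∀ s t, T s t ≤ 1)
    (hTrow : ∀ s, ∑ t, T s t = 1)
    (hstat : ∀ t, ∑ s, π s * T s t = π t)
    (n : ℕ) (hn : 1 ≤ n) :
    Hent (chainDist n π T) (fun ω => ω 0) =
      Iinfo (chainDist n π T) (fun ω => (fun i : Fin n => ω i.succ)) (fun ω => ω 0)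
        + condH (chainDist n π T) (fun ω => ω 1) (fun ω => ω 0) := by
  obtain ⟨m, rfl⟩ : ∃ m, n = m + 1 := ⟨n - 1, (Nat.succ_pred_eq_of_pos hn).symm⟩
  unfold Iinfo condH
  simp only
  rw [Hent_S0 π T hTrow (m+1), Hent_S1S0 π T hπ0 hT0 hTrow m,
    Hent_F π T hπ0 hT0 hTrow hstat m, Hent_FS0 π T hπ0 hT0 hTrow hstat m]
  push_cast
  ring
end
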